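/- If A is a symmetric n×n real matrix whose eigenvalues satisfy a strict gap |λ₁| > |λᵢ| for i ≥ 2, with orthonormal eigenbasis v₁,…,vₙ, and r₀ has nonzero component along v₁ (⟨r₀, v₁⟩ ≠ 0), then λ₁^{-k} A^k r₀ converges to ⟨r₀, v₁⟩ v₁. -/

import Mathlib

open Filter
open scoped RealInnerProductSpace

theorem stmt_9 {n : ℕ} [NeZero n] (A : Matrix (Fin n) (Fin n) ℝ) (hA : A.IsSymm)
    (v : Fin n → EuclideanSpace ℝ (Fin n)) (hv : Orthonormal ℝ v)
    (lam : Fin n → ℝ)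
    (heig : ∀ i, Matrix.toEuclideanLin A (v i) = lam i • v i)
    (hgap : ∀ i, i ≠ 0 → |lam i| < |lam 0|) (hlam : lam 0 ≠ 0)
    (r₀ : EuclideanSpace ℝ (Fin n)) (hr : ⟪r₀, v 0⟫ ≠ 0) :
    Tendsto (fun k : ℕ => ((lam 0) ^ k)⁻¹ • Matrix.toEuclideanLin (A ^ k) r₀)
      atTop (nhds (⟪r₀, v 0⟫ • v 0)) := by
  have hcard : Fintype.card (Fin n) = Module.finrank ℝ (EuclideanSpace ℝ (Fin n)) := by
    simp
  have : Nonempty (Fin n) := ⟨0⟩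
  let b : OrthonormalBasis (Fin n) ℝ (EuclideanSpace ℝ (Fin n)) :=
    (basisOfOrthonormalOfCardEqFinrank hv hcard).toOrthonormalBasis
      (by rwa [coe_basisOfOrthonormalOfCardEqFinrank])
  have hb : ⇑b = v := by
    simp [b, Module.Basis.coe_toOrthonormalBasis, coe_basisOfOrthonormalOfCardEqFinrank]
  -- eigenvalue equation for powers
  have hpow : ∀ (k : ℕ) (i : Fin n),
      Matrix.toEuclideanLin (A ^ k) (v i) = (lam i) ^ k • v i := by
    intro k i
    induction k with
    | zero => simp [Matrix.toEuclideanLin_apply, Matrix.one_mulVec]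
    | succ k ih =>
      rw [pow_succ', Matrix.toEuclideanLin_eq_toLin,
        Matrix.toLin_mul _ (PiLp.basisFun 2 ℝ (Fin n)) _]
      simp only [LinearMap.comp_apply]
      rw [← Matrix.toEuclideanLin_eq_toLin, ih, map_smul, heig, smul_smul, ← pow_succ]
  -- expand r₀
  have hr₀ : r₀ = ∑ i, ⟪r₀, v i⟫ • v i := by
    conv_lhs => rw [← b.sum_repr' r₀]
    refine Finset.sum_congr rfl fun i _ => ?_
    rw [hb, real_inner_comm]
  have hseq : ∀ k : ℕ, ((lam 0) ^ k)⁻¹ • Matrix.toEuclideanLin (A ^ k) r₀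
      = ∑ i, ((lam i / lam 0) ^ k * ⟪r₀, v i⟫) • v i := by
    intro k
    conv_lhs => rw [hr₀]
    rw [map_sum, Finset.smul_sum]
    refine Finset.sum_congr rfl fun i _ => ?_
    rw [map_smul, hpow, smul_smul, smul_smul, div_pow]
    ring_nf
  simp only [hseq]
  have hlim : (⟪r₀, v 0⟫ • v 0 : EuclideanSpace ℝ (Fin n))
      = ∑ i, (if i = 0 then ⟪r₀, v i⟫ else 0) • v i := by
    rw [Finset.sum_eq_single 0]
    · simp
    · intro i _ hi
      simp [hi]
    · simp
  rw [hlim]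
  refine tendsto_finset_sum _ fun i _ => ?_
  by_cases hi : i = 0
  · subst hi
    simp only [if_pos rfl, div_self hlam, one_pow, one_mul]
    exact tendsto_const_nhds
  · simp only [if_neg hi, zero_smul]
    have h1 : |lam i / lam 0| < 1 := by
      rw [abs_div, div_lt_one (abs_pos.mpr hlam)]
      exact hgap i hi
    have h2 : Tendsto (fun k : ℕ => (lam i / lam 0) ^ k) atTop (nhds 0) :=
      tendsto_pow_atTop_nhds_zero_of_abs_lt_one h1
    have h3 : Tendsto (fun k : ℕ => ((lam i / lam 0) ^ k * ⟪r₀, v i⟫) • v i) atTop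
        (nhds ((0 * ⟪r₀, v i⟫) • v i)) :=
      ((h2.mul_const _).smul_const _)
    simpa using h3
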